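/- Let X ∈ ℝ^{m×n₁}, Y ∈ ℝ^{m×n₂}, U ∈ ℝ^{m×r} with UᵀU = I_r, and W ∈ ℝ^{m×r′} with WᵀW = I_{r′} and WᵀU = 0. Let C ∈ ℝ^{r×n₁} be arbitrary, define P = UᵀY, E = Y − U P, K = WᵀE, let X̃ = [X, Y] ∈ ℝ^{m×(n₁+n₂)} be the horizontal concatenation, Ũ = [U, W] ∈ ℝ^{m×(r+r′)}, and let C̃ = [[C, P], [0, K]] ∈ ℝ^{(r+r′)×(n₁+n₂)}. Then ‖X̃ − Ũ C̃‖_F² = ‖X − U C‖_F² + ‖E − W K‖_F². -/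

import Mathlib

open Matrix BigOperators

/-- Squared Frobenius norm of a real matrix. -/
noncomputable def frobSq {m n : Type*} [Fintype m] [Fintype n] (M : Matrix m n ℝ) : ℝ :=
  ∑ i, ∑ j, (M i j) ^ 2

lemma frobSq_fromColumns {m n1 n2 : Type*} [Fintype m] [Fintype n1] [Fintype n2]
    (A : Matrix m n1 ℝ) (B : Matrix m n2 ℝ) :
    frobSq (Matrix.fromCols A B) = frobSq A + frobSq B := by
  simp [frobSq, Fintype.sum_sum_type, Matrix.fromCols, Finset.sum_add_distrib]

/-- Error decomposition for the non-streaming mode factor matrix update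
(equation (18) of the paper). -/
theorem nonstreaming_mode_error_decomposition
    {m n1 n2 r r' : ℕ}
    (X : Matrix (Fin m) (Fin n1) ℝ)
    (Y : Matrix (Fin m) (Fin n2) ℝ)
    (U : Matrix (Fin m) (Fin r) ℝ)
    (W : Matrix (Fin m) (Fin r') ℝ)
    (C : Matrix (Fin r) (Fin n1) ℝ)
    (hU : Uᵀ * U = 1)
    (hW : Wᵀ * W = 1)
    (hWU : Wᵀ * U = 0)
    (P : Matrix (Fin r) (Fin n2) ℝ) (hP : P = Uᵀ * Y)
    (E : Matrix (Fin m) (Fin n2) ℝ) (hE : E = Y - U * P)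
    (K : Matrix (Fin r') (Fin n2) ℝ) (hK : K = Wᵀ * E) :
    frobSq (Matrix.fromCols X Y -
        Matrix.fromCols U W * Matrix.fromBlocks C P 0 K) =
      frobSq (X - U * C) + frobSq (E - W * K) := by
  rw [Matrix.fromCols_mul_fromBlocks]
  have h : Matrix.fromCols X Y -
      Matrix.fromCols (U * C + W * (0 : Matrix (Fin r') (Fin n1) ℝ)) (U * P + W * K) =
      Matrix.fromCols (X - U * C) (E - W * K) := by
    ext i j
    cases j with
    | inl j => simp [Matrix.fromCols, Matrix.mul_zero]
    | inr j => simp [Matrix.fromCols, hE, sub_sub]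
  rw [h, frobSq_fromColumns]
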